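/- Let (X,d,W) be a complete UCW-hyperbolic space, C = C_1 ∪ ... ∪ C_p a finite union of nonempty closed convex subsets of X, and T:C→C a λ-firmly nonexpansive mapping for some λ ∈ (0,1). Then T has a fixed point if and only if T has bounded orbits. -/

import Mathlib

open Metric Set

/-- A geodesic segment in a metric space joining `x` and `y`: the image of an
isometric embedding of a real interval sending the endpoints to `x` and `y`. -/
def IsGeodesicSegment {X : Type*} [MetricSpace X] (S : Set X) (x y : X) : Prop :=
  ∃ (a b : ℝ) (γ : ℝ → X), a ≤ b ∧ γ a = x ∧ γ b = y ∧
    (∀ s ∈ Set.Icc a b, ∀ t ∈ Set.Icc a b, dist (γ s) (γ t) = |s - t|) ∧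
    S = γ '' Set.Icc a b

/-- A metric space is geodesic if every two points are joined by a geodesic segment. -/
def GeodesicSpace (X : Type*) [MetricSpace X] : Prop :=
  ∀ x y : X, ∃ S : Set X, IsGeodesicSegment S x y

/-- `(X,d,W)` is a W-hyperbolic space: the convexity mapping `W` satisfies
axioms (W1)-(W4) for all parameters in `[0,1]`. -/
def IsWHyperbolic {X : Type*} [MetricSpace X] (W : X → X → ℝ → X) : Prop :=
  (∀ x y z : X, ∀ l ∈ Set.Icc (0:ℝ) 1,
      dist z (W x y l) ≤ (1 - l) * dist z x + l * dist z y) ∧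
  (∀ x y : X, ∀ l ∈ Set.Icc (0:ℝ) 1, ∀ l' ∈ Set.Icc (0:ℝ) 1,
      dist (W x y l) (W x y l') = |l - l'| * dist x y) ∧
  (∀ x y : X, ∀ l ∈ Set.Icc (0:ℝ) 1, W x y l = W y x (1 - l)) ∧
  (∀ x y z w : X, ∀ l ∈ Set.Icc (0:ℝ) 1,
      dist (W x z l) (W y w l) ≤ (1 - l) * dist x y + l * dist z w)

/-- `η` is a monotone modulus of uniform convexity for `(X,d,W)`:
it witnesses uniform convexity and decreases in `r` for fixed `ε`. -/
def IsMonotoneModulus {X : Type*} [MetricSpace X] (W : X → X → ℝ → X)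
    (η : ℝ → ℝ → ℝ) : Prop :=
  (∀ r > (0:ℝ), ∀ ε ∈ Set.Ioc (0:ℝ) 2, η r ε ∈ Set.Ioc (0:ℝ) 1 ∧
    ∀ a x y : X, dist x a ≤ r → dist y a ≤ r → ε * r ≤ dist x y →
      dist (W x y (1/2)) a ≤ (1 - η r ε) * r) ∧
  (∀ ε ∈ Set.Ioc (0:ℝ) 2, ∀ r s : ℝ, 0 < r → r ≤ s → η s ε ≤ η r ε)

/-- A subset is convex if it contains the segments of its points. -/
def IsWConvex {X : Type*} [MetricSpace X] (W : X → X → ℝ → X) (C : Set X) : Prop :=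
  ∀ x ∈ C, ∀ y ∈ C, ∀ l ∈ Set.Icc (0:ℝ) 1, W x y l ∈ C

lemma real_le_of_forall_pos {a b : ℝ} (h : ∀ ε : ℝ, 0 < ε → a ≤ b + ε) : a ≤ b := by
  by_contra hc
  push_neg at hc
  have := h ((a - b)/2) (by linarith)
  linarith

lemma nonexp_of_firm {X : Type*} [MetricSpace X] {W : X → X → ℝ → X} (hW : IsWHyperbolic W)
    {C : Set X} {T : X → X} {l : ℝ} (hl : l ∈ Set.Ioo (0:ℝ) 1)
    (hT : ∀ x ∈ C, ∀ y ∈ C, dist (T x) (T y) ≤ dist (W x (T x) l) (W y (T y) l)) :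
    ∀ x ∈ C, ∀ y ∈ C, dist (T x) (T y) ≤ dist x y := by
  intro x hx y hy
  have h1 := hT x hx y hy
  have h2 := hW.2.2.2 x y (T x) (T y) l ⟨hl.1.le, hl.2.le⟩
  have hl1 : 0 < 1 - l := by linarith [hl.2]
  nlinarith [dist_nonneg (x := T x) (y := T y), dist_nonneg (x := x) (y := y)]

lemma periodic_fixed {X : Type*} [MetricSpace X] {W : X → X → ℝ → X} (hW : IsWHyperbolic W)
    {C : Set X} {T : X → X} (hTC : Set.MapsTo T C C) {l : ℝ} (hl : l ∈ Set.Ioo (0:ℝ) 1)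
    (hT : ∀ x ∈ C, ∀ y ∈ C, dist (T x) (T y) ≤ dist (W x (T x) l) (W y (T y) l))
    {z : X} (hz : z ∈ C) {m : ℕ} (hm : 1 ≤ m) (hzm : T^[m] z = z) : T z = z := by
  have hl' : l ∈ Set.Icc (0:ℝ) 1 := ⟨hl.1.le, hl.2.le⟩
  have hne := nonexp_of_firm hW hl hT
  set zi : ℕ → X := fun i => T^[i] z with hzidef
  have hziC : ∀ i, zi i ∈ C := fun i => hTC.iterate i hz
  have hsucc : ∀ i, zi (i+1) = T (zi i) := fun i => Function.iterate_succ_apply' T i z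
  have hper : ∀ i, zi (i + m) = zi i := by
    intro i
    show T^[i+m] z = T^[i] z
    rw [Function.iterate_add_apply, hzm]
  have hconst : ∀ i j, dist (zi i) (zi (i + j)) = dist (zi 0) (zi j) := by
    intro i j
    set c : ℕ → ℝ := fun i => dist (zi i) (zi (i + j)) with hcdef
    have hstep : ∀ i, c (i+1) ≤ c i := by
      intro i
      have h1 : zi (i+1+j) = T (zi (i+j)) := by
        have : i+1+j = (i+j)+1 := by omega
        rw [this, hsucc]
      show dist (zi (i+1)) (zi (i+1+j)) ≤ dist (zi i) (zi (i+j))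
      rw [hsucc, h1]
      exact hne _ (hziC _) _ (hziC _)
    have hanti : Antitone c := antitone_nat_of_succ_le hstep
    have hcper : ∀ i, c (i + m) = c i := by
      intro i
      show dist (zi (i+m)) (zi (i+m+j)) = dist (zi i) (zi (i+j))
      have : i+m+j = (i+j)+m := by omega
      rw [this, hper, hper]
    have hmul : ∀ k, c (m * k) = c 0 := by
      intro k
      induction k with
      | zero => simp
      | succ k ih =>
        have : m * (k+1) = m * k + m := by ring
        rw [this, hcper, ih]
    have h1 : c i ≤ c 0 := hanti (Nat.zero_le i)
    have h2 : c 0 ≤ c i := by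
      have hle : i ≤ m * i := Nat.le_mul_of_pos_left i hm
      calc c 0 = c (m * i) := (hmul i).symm
        _ ≤ c i := hanti hle
    have h0 : c 0 = dist (zi 0) (zi j) := by
      show dist (zi 0) (zi (0+j)) = _
      rw [Nat.zero_add]
    rw [← h0]
    exact le_antisymm h1 h2
  set δ := dist (zi 0) (zi 1) with hδdef
  have hδ0 : 0 ≤ δ := dist_nonneg
  have hl0 : 0 < l := hl.1
  have hl1 : 0 < 1 - l := by linarith [hl.2]
  have main : ∀ j, dist (zi 0) (zi j) = j * δ ∧ dist (zi 0) (zi (j+1)) = (j+1) * δ := by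
    intro j
    induction j with
    | zero => simp [hδdef]
    | succ j ih =>
      obtain ⟨ihj, ihj1⟩ := ih
      refine ⟨by push_cast; exact_mod_cast ihj1, ?_⟩
      -- goal : dist (zi 0) (zi (j+2)) = (j+2) * δ
      have e1 : dist (zi 1) (zi (j+2)) = (j+1) * δ := by
        have := hconst 1 (j+1)
        rw [show 1 + (j+1) = j+2 from by omega] at this
        rw [this]; exact ihj1
      have e2 : dist (zi 1) (zi (j+1)) = j * δ := by
        have := hconst 1 j
        rw [show 1 + j = j+1 from by omega] at this
        rw [this]; exact ihj
      have e3 : dist (zi (j+1)) (zi (j+2)) = δ := by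
        have := hconst (j+1) 1
        rwa [show j+1+1 = j+2 from rfl] at this
      set u := W (zi 0) (zi 1) l with hudef
      set v := W (zi (j+1)) (zi (j+2)) l with hvdef
      have h1 : ((j:ℝ)+1) * δ ≤ dist u v := by
        have := hT (zi 0) (hziC 0) (zi (j+1)) (hziC (j+1))
        rw [← hsucc 0, ← hsucc (j+1)] at this
        rw [← e1]
        simpa using this
      have h2 : dist u v ≤ (1-l) * dist u (zi (j+1)) + l * dist u (zi (j+2)) :=
        hW.1 (zi (j+1)) (zi (j+2)) u l hl'
      have h3 : dist u (zi (j+1)) ≤ (1-l) * (((j:ℝ)+1) * δ) + l * ((j:ℝ) * δ) := by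
        have := hW.1 (zi 0) (zi 1) (zi (j+1)) l hl'
        rw [dist_comm (zi (j+1)) (zi 0), dist_comm (zi (j+1)) (zi 1)] at this
        rw [ihj1, e2] at this
        rw [dist_comm u]
        exact_mod_cast this
      have h4 : dist u (zi (j+2)) ≤ (1-l) * dist (zi 0) (zi (j+2)) + l * (((j:ℝ)+1) * δ) := by
        have := hW.1 (zi 0) (zi 1) (zi (j+2)) l hl'
        rw [dist_comm (zi (j+2)) (zi 0), dist_comm (zi (j+2)) (zi 1)] at this
        rw [e1] at this
        rw [dist_comm u]
        exact this
      have hupper : dist (zi 0) (zi (j+2)) ≤ ((j:ℝ)+2) * δ := by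
        calc dist (zi 0) (zi (j+2)) ≤ dist (zi 0) (zi (j+1)) + dist (zi (j+1)) (zi (j+2)) :=
              dist_triangle _ _ _
          _ = ((j:ℝ)+1) * δ + δ := by rw [ihj1, e3]
          _ = ((j:ℝ)+2) * δ := by ring
      have hlower : ((j:ℝ)+2) * δ ≤ dist (zi 0) (zi (j+2)) := by
        have key : l * (1-l) * (((j:ℝ)+2) * δ) ≤ l * (1-l) * dist (zi 0) (zi (j+2)) := by
          nlinarith [mul_le_mul_of_nonneg_left h3 hl1.le, mul_le_mul_of_nonneg_left h4 hl0.le]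
        have hpos : 0 < l * (1-l) := mul_pos hl0 hl1
        exact le_of_mul_le_mul_left key hpos
      have : dist (zi 0) (zi (j+2)) = ((j:ℝ)+2) * δ := le_antisymm hupper hlower
      rw [this]; push_cast; ring
  have hm0 : dist (zi 0) (zi m) = m * δ := (main m).1
  have hzm0 : zi m = zi 0 := by
    have := hper 0
    simpa using this
  rw [hzm0, dist_self] at hm0
  have hδz : δ = 0 := by
    have hm' : (0:ℝ) < m := by exact_mod_cast hm
    by_contra hδ
    have : 0 < δ := lt_of_le_of_ne hδ0 (Ne.symm hδ)
    nlinarith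
  have : dist z (T z) = 0 := by
    have h01 : zi 1 = T z := by
      show T^[1] z = T z
      simp
    rw [← h01]
    exact hδz ▸ rfl
  have := dist_eq_zero.mp this
  exact this.symm

theorem stmt15 {X : Type*} [MetricSpace X] [CompleteSpace X]
    (W : X → X → ℝ → X) (hW : IsWHyperbolic W)
    (η : ℝ → ℝ → ℝ) (hη : IsMonotoneModulus W η)
    (p : ℕ) (hp : 1 ≤ p) (Cs : Fin p → Set X)
    (hCs : ∀ k, (Cs k).Nonempty ∧ IsClosed (Cs k) ∧ IsWConvex W (Cs k))
    (C : Set X) (hC : C = ⋃ k, Cs k)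
    (T : X → X) (hTC : Set.MapsTo T C C)
    (l : ℝ) (hl : l ∈ Set.Ioo (0:ℝ) 1)
    (hT : ∀ x ∈ C, ∀ y ∈ C, dist (T x) (T y) ≤ dist (W x (T x) l) (W y (T y) l)) :
    (∃ x ∈ C, T x = x) ↔
      ∀ x ∈ C, Bornology.IsBounded (Set.range fun n : ℕ => T^[n] x) := by
  have hne := nonexp_of_firm hW hl hT
  constructor
  · rintro ⟨x₀, hx₀C, hfix⟩ x hx
    have hiter : ∀ n, T^[n] x ∈ C := fun n => hTC.iterate n hx
    have hb : ∀ n, dist (T^[n] x) x₀ ≤ dist x x₀ := by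
      intro n
      induction n with
      | zero => simp
      | succ n ih =>
        rw [Function.iterate_succ_apply']
        calc dist (T (T^[n] x)) x₀ = dist (T (T^[n] x)) (T x₀) := by rw [hfix]
          _ ≤ dist (T^[n] x) x₀ := hne _ (hiter n) _ hx₀C
          _ ≤ dist x x₀ := ih
    refine (Metric.isBounded_closedBall (x := x₀) (r := dist x x₀)).subset ?_
    rintro y ⟨n, rfl⟩
    exact Metric.mem_closedBall.2 (hb n)
  · intro hball
    have hpp : 0 < p := hp
    set k1 : Fin p := ⟨0, hpp⟩ with hk1
    obtain ⟨x₀, hx₀⟩ := (hCs k1).1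
    have hx₀C : x₀ ∈ C := by
      rw [hC]; exact Set.mem_iUnion.2 ⟨k1, hx₀⟩
    set x : ℕ → X := fun n => T^[n] x₀ with hxdef
    have hxC : ∀ n, x n ∈ C := fun n => hTC.iterate n hx₀C
    obtain ⟨K, hK⟩ := (hball x₀ hx₀C).subset_closedBall x₀
    have hKb : ∀ n, dist (x n) x₀ ≤ K := fun n => Metric.mem_closedBall.1 (hK ⟨n, rfl⟩)
    set φ : X → ℝ := fun y => Filter.limsup (fun n => dist y (x n)) Filter.atTop with hφdef
    have hBdd : ∀ y : X, Filter.IsBoundedUnder (· ≤ ·) Filter.atTop (fun n => dist y (x n)) := by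
      intro y
      refine Filter.isBoundedUnder_of ⟨dist y x₀ + K, fun n => ?_⟩
      have h1 := dist_triangle y x₀ (x n)
      have h2 := hKb n
      rw [dist_comm x₀ (x n)] at h1
      show dist y (x n) ≤ dist y x₀ + K
      linarith
    have hCob : ∀ y : X, Filter.IsCoboundedUnder (· ≤ ·) Filter.atTop (fun n => dist y (x n)) :=
      fun y => Filter.isCoboundedUnder_le_of_le _ (fun n => dist_nonneg)
    have hφ0 : ∀ y, 0 ≤ φ y := fun y =>
      Filter.le_limsup_of_frequently_le (Filter.Frequently.of_forall fun n => dist_nonneg) (hBdd y)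
    have hφ_le : ∀ y : X, ∀ a : ℝ, (∀ᶠ n in Filter.atTop, dist y (x n) ≤ a) → φ y ≤ a :=
      fun y a h => Filter.limsup_le_of_le (hCob y) h
    have hφ_lt : ∀ y : X, ∀ a : ℝ, φ y < a → ∀ᶠ n in Filter.atTop, dist y (x n) < a :=
      fun y a h => Filter.eventually_lt_of_limsup_lt h (hBdd y)
    have hφ_lip : ∀ y y' : X, φ y ≤ φ y' + dist y y' := by
      intro y y'
      refine real_le_of_forall_pos fun t ht => ?_
      have h1 := hφ_lt y' (φ y' + t) (by linarith)
      refine hφ_le y _ (h1.mono fun n hn => ?_)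
      calc dist y (x n) ≤ dist y y' + dist y' (x n) := dist_triangle _ _ _
        _ ≤ dist y y' + (φ y' + t) := by linarith
        _ = φ y' + dist y y' + t := by ring
    have hφ_add : ∀ y y' : X, dist y y' ≤ φ y + φ y' := by
      intro y y'
      refine real_le_of_forall_pos fun t ht => ?_
      have h1 := hφ_lt y (φ y + t/2) (by linarith)
      have h2 := hφ_lt y' (φ y' + t/2) (by linarith)
      obtain ⟨n, hn1, hn2⟩ := (h1.and h2).exists
      have := dist_triangle_right y y' (x n)
      linarith
    have hφT : ∀ y ∈ C, φ (T y) ≤ φ y := by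
      intro y hy
      have hshift : φ (T y) = Filter.limsup (fun n => dist (T y) (x (n+1))) Filter.atTop :=
        (Filter.limsup_nat_add (fun n => dist (T y) (x n)) 1).symm
      rw [hshift]
      refine Filter.limsup_le_limsup (Filter.Eventually.of_forall fun n => ?_)
        (Filter.isCoboundedUnder_le_of_le _ (fun n => dist_nonneg)) (hBdd y)
      have hx1 : x (n+1) = T (x n) := Function.iterate_succ_apply' T n x₀
      show dist (T y) (x (n+1)) ≤ dist y (x n)
      rw [hx1]
      exact hne y hy (x n) (hxC n)
    set ρ : Fin p → ℝ := fun k => sInf (φ '' Cs k) with hρdef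
    have hρ_lb : ∀ k : Fin p, ∀ y ∈ Cs k, ρ k ≤ φ y := by
      intro k y hy
      refine csInf_le ⟨0, ?_⟩ (Set.mem_image_of_mem φ hy)
      rintro b ⟨u, hu, rfl⟩
      exact hφ0 u
    have hρ0 : ∀ k, 0 ≤ ρ k := by
      intro k
      refine le_csInf ((hCs k).1.image φ) ?_
      rintro b ⟨u, hu, rfl⟩
      exact hφ0 u
    -- the key uniform convexity claim
    have claim1 : ∀ k : Fin p, ∀ ε : ℝ, 0 < ε → ε ≤ 1 → ∃ θ > (0:ℝ), ∀ u ∈ Cs k, ∀ v ∈ Cs k,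
        φ u ≤ ρ k + θ → φ v ≤ ρ k + θ → dist u v ≤ ε := by
      intro k ε hε hε1
      rcases le_or_gt (ρ k) (ε/4) with hcase | hcase
      · refine ⟨ε/4, by positivity, fun u hu v hv h1 h2 => ?_⟩
        have := hφ_add u v
        linarith
      · have hρpos : 0 < ρ k := lt_trans (by positivity) hcase
        set R : ℝ := ρ k + 1 with hR
        have hRpos : 0 < R := by simp only [hR]; linarith
        have hR1 : 1 ≤ R := by simp only [hR]; linarith
        set ε₀ : ℝ := ε / R with hε₀def
        have hε₀pos : 0 < ε₀ := div_pos hε hRpos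
        have hε₀2 : ε₀ ≤ 2 := by
          rw [hε₀def, div_le_iff₀ hRpos]
          nlinarith
        obtain ⟨hη₀mem, _⟩ := hη.1 R hRpos ε₀ ⟨hε₀pos, hε₀2⟩
        set η₀ : ℝ := η R ε₀ with hη₀def
        have hη₀pos : 0 < η₀ := hη₀mem.1
        have hη₀1 : η₀ ≤ 1 := hη₀mem.2
        set θ : ℝ := min (η₀ * ρ k / 4) (1/2) with hθdef
        have hθpos : 0 < θ := by
          apply lt_min (by positivity) (by norm_num)
        refine ⟨θ, hθpos, fun u hu v hv h1 h2 => ?_⟩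
        by_contra hd
        push_neg at hd
        set r : ℝ := ρ k + 2*θ with hrdef
        have hrpos : 0 < r := by simp only [hrdef]; linarith
        have hrR : r ≤ R := by
          have : θ ≤ 1/2 := min_le_right _ _
          simp only [hrdef, hR]; linarith
        have hu' := hφ_lt u r (by simp only [hrdef]; linarith)
        have hv' := hφ_lt v r (by simp only [hrdef]; linarith)
        have hmid : ∀ᶠ n in Filter.atTop, dist (W u v (1/2)) (x n) ≤ (1 - η₀) * r := by
          filter_upwards [hu', hv'] with n h1n h2n
          have hdd : ε₀ * r ≤ dist u v := by
            have h5 : ε₀ * r ≤ ε₀ * R := by nlinarith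
            have h6 : ε₀ * R = ε := div_mul_cancel₀ ε (ne_of_gt hRpos)
            linarith
          have huc := (hη.1 r hrpos ε₀ ⟨hε₀pos, hε₀2⟩).2 (x n) u v h1n.le h2n.le hdd
          have hmono := hη.2 ε₀ ⟨hε₀pos, hε₀2⟩ r R hrpos hrR
          calc dist (W u v (1/2)) (x n) ≤ (1 - η r ε₀) * r := huc
            _ ≤ (1 - η₀) * r := by nlinarith
        have hW12 : W u v (1/2) ∈ Cs k := (hCs k).2.2 u hu v hv (1/2) (by norm_num)
        have hcon : ρ k ≤ (1 - η₀) * r := le_trans (hρ_lb k _ hW12) (hφ_le _ _ hmid)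
        have hθle : θ ≤ η₀ * ρ k / 4 := min_le_left _ _
        nlinarith
    have claim : ∀ k : Fin p, ∀ ε : ℝ, 0 < ε → ∃ θ > (0:ℝ), ∀ u ∈ Cs k, ∀ v ∈ Cs k,
        φ u ≤ ρ k + θ → φ v ≤ ρ k + θ → dist u v ≤ ε := by
      intro k ε hε
      obtain ⟨θ, hθ, h⟩ := claim1 k (min ε 1) (lt_min hε one_pos) (min_le_right _ _)
      exact ⟨θ, hθ, fun u hu v hv h1 h2 => (h u hu v hv h1 h2).trans (min_le_left _ _)⟩
    -- existence of minimizers on each piece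
    have hmin : ∀ k : Fin p, ∃ z ∈ Cs k, φ z = ρ k := by
      intro k
      have hne_img : (φ '' Cs k).Nonempty := (hCs k).1.image φ
      have hsel : ∀ m : ℕ, ∃ y, y ∈ Cs k ∧ φ y < ρ k + 1/(m+1) := by
        intro m
        have hlt : ρ k < ρ k + 1/((m:ℝ)+1) := by
          have : (0:ℝ) < 1/((m:ℝ)+1) := by positivity
          linarith
        obtain ⟨b, hbmem, hb⟩ := exists_lt_of_csInf_lt hne_img hlt
        obtain ⟨u, hu, rfl⟩ := hbmem
        exact ⟨u, hu, hb⟩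
      choose y hyC hyφ using hsel
      have hcauchy : CauchySeq y := by
        rw [Metric.cauchySeq_iff]
        intro ε hε
        obtain ⟨θ, hθ, hcl⟩ := claim k (ε/2) (half_pos hε)
        obtain ⟨N, hN⟩ := exists_nat_gt (1/θ)
        refine ⟨N, fun a ha b hb => ?_⟩
        have hbound : ∀ c : ℕ, N ≤ c → φ (y c) ≤ ρ k + θ := by
          intro c hc
          have h1 : 1/((c:ℝ)+1) ≤ θ := by
            rw [div_le_iff₀ (by positivity)]
            have : (N:ℝ) ≤ (c:ℝ) := by exact_mod_cast hc
            rw [div_lt_iff₀ hθ] at hN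
            nlinarith
          have := hyφ c
          linarith
        have := hcl (y a) (hyC a) (y b) (hyC b) (hbound a ha) (hbound b hb)
        linarith
      obtain ⟨z, hz⟩ := cauchySeq_tendsto_of_complete hcauchy
      have hzK : z ∈ Cs k := (hCs k).2.1.mem_of_tendsto hz (Filter.Eventually.of_forall hyC)
      refine ⟨z, hzK, le_antisymm ?_ (hρ_lb k z hzK)⟩
      refine real_le_of_forall_pos fun t ht => ?_
      obtain ⟨N1, hN1⟩ := Metric.tendsto_atTop.1 hz (t/2) (half_pos ht)
      obtain ⟨N2, hN2⟩ := exists_nat_gt (2/t)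
      set m : ℕ := max N1 N2 with hmdef
      have ha : dist (y m) z < t/2 := hN1 m (le_max_left _ _)
      have hb : 1/((m:ℝ)+1) ≤ t/2 := by
        have h2 : (N2:ℝ) ≤ (m:ℝ) := by exact_mod_cast le_max_right N1 N2
        rw [div_lt_iff₀ ht] at hN2
        rw [div_le_iff₀ (by positivity)]
        nlinarith
      have hlip := hφ_lip z (y m)
      have hyb := hyφ m
      rw [dist_comm z (y m)] at hlip
      linarith
    -- global minimizer and periodic point
    choose zmin hzminC hzminφ using hmin
    obtain ⟨k₀, _, hk₀⟩ := Finset.exists_min_image Finset.univ ρ ⟨k1, Finset.mem_univ k1⟩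
    set z₀ : X := zmin k₀ with hz₀def
    have hz₀C : z₀ ∈ C := by
      rw [hC]; exact Set.mem_iUnion.2 ⟨k₀, hzminC k₀⟩
    have hglobal : ∀ y ∈ C, ρ k₀ ≤ φ y := by
      intro y hy
      rw [hC] at hy
      obtain ⟨k, hk⟩ := Set.mem_iUnion.1 hy
      exact le_trans (hk₀ k (Finset.mem_univ k)) (hρ_lb k y hk)
    have horb : ∀ i : ℕ, T^[i] z₀ ∈ C ∧ φ (T^[i] z₀) = ρ k₀ := by
      intro i
      induction i with
      | zero => exact ⟨hz₀C, hzminφ k₀⟩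
      | succ i ih =>
        have hC' : T^[i+1] z₀ ∈ C := by
          rw [Function.iterate_succ_apply']
          exact hTC ih.1
        refine ⟨hC', le_antisymm ?_ (hglobal _ hC')⟩
        rw [Function.iterate_succ_apply']
        exact le_trans (hφT _ ih.1) (le_of_eq ih.2)
    have hgsel : ∀ i : ℕ, ∃ k : Fin p, T^[i] z₀ ∈ Cs k := by
      intro i
      have := (horb i).1
      rw [hC] at this
      exact Set.mem_iUnion.1 this
    choose g hg using hgsel
    obtain ⟨a, b, hab, hgab⟩ :=
      Fintype.exists_ne_map_eq_of_card_lt (fun i : Fin (p+1) => g i) (by simp)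
    -- wlog a < b
    obtain ⟨i, j, hij, hgij⟩ : ∃ i j : ℕ, i < j ∧ g i = g j := by
      rcases lt_or_gt_of_ne (Fin.val_ne_of_ne hab) with h | h
      · exact ⟨a, b, h, hgab⟩
      · exact ⟨b, a, h, hgab.symm⟩
    set k : Fin p := g i with hkdef
    have hρk : ρ k = ρ k₀ := by
      refine le_antisymm ?_ (hk₀ k (Finset.mem_univ k))
      calc ρ k ≤ φ (T^[i] z₀) := hρ_lb k _ (hg i)
        _ = ρ k₀ := (horb i).2
    have heq : T^[i] z₀ = T^[j] z₀ := by
      have hdist : ∀ ε : ℝ, 0 < ε → dist (T^[i] z₀) (T^[j] z₀) ≤ 0 + ε := by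
        intro ε hε
        obtain ⟨θ, hθ, hcl⟩ := claim k ε hε
        have h1 : φ (T^[i] z₀) ≤ ρ k + θ := by
          rw [(horb i).2, hρk]; linarith
        have h2 : φ (T^[j] z₀) ≤ ρ k + θ := by
          rw [(horb j).2, hρk]; linarith
        have hgj : T^[j] z₀ ∈ Cs k := by rw [hgij]; exact hg j
        have := hcl _ (hg i) _ hgj h1 h2
        linarith
      have := real_le_of_forall_pos hdist
      exact dist_le_zero.1 this
    have hper : T^[j - i] (T^[i] z₀) = T^[i] z₀ := by
      rw [← Function.iterate_add_apply]
      rw [show j - i + i = j from by omega]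
      exact heq.symm
    exact ⟨T^[i] z₀, (horb i).1,
      periodic_fixed hW hTC hl hT (horb i).1 (by omega : 1 ≤ j - i) hper⟩
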